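/- arXiv:2511.21357 — 2 statements merged into one kernel-verified Lean document; each statement's English description precedes it below -/
import Mathlib

section
/- For Legendre polynomials P_m and any u ∈ (0, π): ∫₀^u P_m(cos θ) sin θ / √(cos θ - cos u) dθ = (2√2/(2m+1)) · sin((m + 1/2)u). -/
open Real

/-- The Legendre polynomials (as real functions), via Bonnet's recursion. -/
noncomputable def legendreP : ℕ → ℝ → ℝ
  | 0 => fun _ => 1
  | 1 => fun x => x
  | (n + 2) => fun x =>
      ((2 * (n : ℝ) + 3) * x * legendreP (n + 1) x - ((n : ℝ) + 1) * legendreP n x) / ((n : ℝ) + 2)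


open Polynomial

noncomputable def legP : ℕ → Polynomial ℝ
  | 0 => 1
  | 1 => X
  | (n+2) => C (((n:ℝ)+2)⁻¹) * (C (2*(n:ℝ)+3) * X * legP (n+1) - C ((n:ℝ)+1) * legP n)

lemma bonnet (n : ℕ) : C ((n:ℝ)+2) * legP (n+2)
    = C (2*(n:ℝ)+3) * X * legP (n+1) - C ((n:ℝ)+1) * legP n := by
  have h : ((n:ℝ)+2) ≠ 0 := by positivity
  rw [legP, ← mul_assoc, ← C_mul, mul_inv_cancel₀ h, C_1, one_mul]

lemma legAB (n : ℕ) :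
    (derivative (legP (n+1)) = C ((n:ℝ)+1) * legP n + X * derivative (legP n)) ∧
    (X * derivative (legP (n+1)) - derivative (legP n) = C ((n:ℝ)+1) * legP (n+1)) := by
  induction n with
  | zero => constructor <;> simp [legP]
  | succ n ih =>
    obtain ⟨hA, hB⟩ := ih
    have hB' := congrArg derivative (bonnet n)
    simp only [derivative_mul, derivative_C, derivative_X, zero_mul, one_mul, mul_one,
      derivative_sub, zero_add, add_zero] at hB'
    have hCne : (C ((n:ℝ)+2) : Polynomial ℝ) ≠ 0 := by
      simp only [ne_eq, C_eq_zero]; positivity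
    have hbon := bonnet n
    simp only [C_add, C_mul, map_ofNat, C_1] at hB' hA hB hbon
    have hA1 : derivative (legP (n+2)) = (C (n:ℝ) + 2) * legP (n+1) + X * derivative (legP (n+1)) := by
      apply mul_left_cancel₀ hCne
      simp only [C_add, map_ofNat]
      linear_combination hB' + (C ((n:ℝ)) + 1) * hB
    constructor
    · show derivative (legP (n+2)) = C (((n+1:ℕ):ℝ)+1) * legP (n+1) + X * derivative (legP (n+1))
      push_cast
      simp only [C_add, C_mul, map_ofNat, C_1]
      linear_combination hA1
    · show X * derivative (legP (n+2)) - derivative (legP (n+1)) = C (((n+1:ℕ):ℝ)+1) * legP (n+2)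
      push_cast
      simp only [C_add, C_mul, map_ofNat, C_1]
      linear_combination X * hA1 + X * hB - hA - hbon

lemma legD (n : ℕ) : derivative (legP (n+2)) - derivative (legP n)
    = C (2*(n:ℝ)+3) * legP (n+1) := by
  have hA := (legAB (n+1)).1
  have hB := (legAB n).2
  push_cast at hA
  simp only [C_add, C_mul, map_ofNat, C_1] at hA hB ⊢
  linear_combination hA + hB

lemma legP_eval : ∀ (n : ℕ) (x : ℝ), (legP n).eval x = legendreP n x
  | 0, x => by simp [legP, legendreP]
  | 1, x => by simp [legP, legendreP]
  | (n+2), x => by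
    have h : ((n:ℝ)+2) ≠ 0 := by positivity
    simp only [legP, legendreP, eval_mul, eval_C, eval_X, eval_sub,
      legP_eval (n+1), legP_eval n]
    field_simp

lemma legP_eval_one : ∀ n : ℕ, (legP n).eval 1 = 1
  | 0 => by simp [legP]
  | 1 => by simp [legP]
  | (n+2) => by
    have h : ((n:ℝ)+2) ≠ 0 := by positivity
    simp only [legP, eval_mul, eval_C, eval_X, eval_sub,
      legP_eval_one (n+1), legP_eval_one n]
    field_simp
    ring

section
variable (c : ℝ)

noncomputable def legI (p : Polynomial ℝ) (c : ℝ) : ℝ :=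
  ∫ σ in (0:ℝ)..1, p.eval (c + (1-c)*σ^2)

lemma cont_eval (p : Polynomial ℝ) : Continuous fun σ : ℝ => p.eval (c + (1-c)*σ^2) :=
  p.continuous.comp (by continuity)

lemma cont_eval2 (p : Polynomial ℝ) :
    Continuous fun σ : ℝ => 2*(1-c)*σ^2 * p.eval (c + (1-c)*σ^2) :=
  (by continuity : Continuous fun σ:ℝ => 2*(1-c)*σ^2).mul (cont_eval c p)

lemma hasDeriv_y (σ : ℝ) : HasDerivAt (fun σ : ℝ => c + (1-c)*σ^2) (2*(1-c)*σ) σ := by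
  have h := ((hasDerivAt_pow 2 σ).const_mul (1-c)).const_add c
  refine h.congr_deriv (Eq.symm ?_)
  ring

lemma legIBP (p : Polynomial ℝ) :
    (∫ σ in (0:ℝ)..1, (p.eval (c + (1-c)*σ^2)
      + 2*(1-c)*σ^2 * (derivative p).eval (c + (1-c)*σ^2))) = p.eval 1 := by
  have hF : ∀ σ ∈ Set.uIcc (0:ℝ) 1, HasDerivAt (fun σ : ℝ => σ * p.eval (c + (1-c)*σ^2))
      (p.eval (c + (1-c)*σ^2) + 2*(1-c)*σ^2 * (derivative p).eval (c + (1-c)*σ^2)) σ := by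
    intro σ _
    have h2 : HasDerivAt (fun σ : ℝ => p.eval (c + (1-c)*σ^2))
        ((derivative p).eval (c + (1-c)*σ^2) * (2*(1-c)*σ)) σ :=
      (p.hasDerivAt _).comp σ (hasDeriv_y c σ)
    have h3 := (hasDerivAt_id σ).mul h2
    simp only [id_eq] at h3
    refine h3.congr_deriv (Eq.symm ?_)
    ring
  have h := intervalIntegral.integral_eq_sub_of_hasDerivAt hF
    (((cont_eval c p).add (cont_eval2 c (derivative p))).intervalIntegrable 0 1)
  rw [h]
  norm_num

lemma legI_rec (m : ℕ) :
    (2*(m:ℝ)+5) * legI (legP (m+2)) c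
      = 2*(2*(m:ℝ)+3)*c * legI (legP (m+1)) c - (2*(m:ℝ)+1) * legI (legP m) c := by
  -- split IBP identities
  have hsplit : ∀ p : Polynomial ℝ, legI p c
      + (∫ σ in (0:ℝ)..1, 2*(1-c)*σ^2 * (derivative p).eval (c + (1-c)*σ^2)) = p.eval 1 := by
    intro p
    rw [legI, ← intervalIntegral.integral_add ((cont_eval c p).intervalIntegrable 0 1)
      ((cont_eval2 c (derivative p)).intervalIntegrable 0 1)]
    exact legIBP c p
  have h2 := hsplit (legP (m+2))
  have h0 := hsplit (legP m)
  rw [legP_eval_one] at h2 h0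
  -- the K integral
  set K := ∫ σ in (0:ℝ)..1, 2*(1-c)*σ^2 * (legP (m+1)).eval (c + (1-c)*σ^2) with hK
  -- derivative identity integrated
  have hDint : (∫ σ in (0:ℝ)..1, 2*(1-c)*σ^2 * (derivative (legP (m+2))).eval (c + (1-c)*σ^2))
      - (∫ σ in (0:ℝ)..1, 2*(1-c)*σ^2 * (derivative (legP m)).eval (c + (1-c)*σ^2))
      = (2*(m:ℝ)+3) * K := by
    rw [← intervalIntegral.integral_sub ((cont_eval2 c _).intervalIntegrable 0 1)
      ((cont_eval2 c _).intervalIntegrable 0 1), hK, ← intervalIntegral.integral_const_mul]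
    apply intervalIntegral.integral_congr
    intro σ _
    have := congrArg (eval (c + (1-c)*σ^2)) (legD m)
    simp only [eval_sub, eval_mul, eval_C] at this
    dsimp only
    linear_combination (2*(1-c)*σ^2) * this
  -- Bonnet integrated
  have hBon : ((m:ℝ)+2) * legI (legP (m+2)) c
      = (2*(m:ℝ)+3)*c * legI (legP (m+1)) c + ((2*(m:ℝ)+3)/2) * K - ((m:ℝ)+1) * legI (legP m) c := by
    rw [legI, legI, legI, hK, ← intervalIntegral.integral_const_mul,
      ← intervalIntegral.integral_const_mul, ← intervalIntegral.integral_const_mul,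
      ← intervalIntegral.integral_const_mul, ← intervalIntegral.integral_add (f := (fun σ : ℝ => (2*(m:ℝ)+3)*c * (legP (m+1)).eval (c + (1-c)*σ^2)))
        (g := (fun σ : ℝ => (2*(m:ℝ)+3)/2 * (2*(1-c)*σ^2 * (legP (m+1)).eval (c + (1-c)*σ^2))))
        ((continuous_const.mul (cont_eval c _)).intervalIntegrable 0 1 : IntervalIntegrable
          (fun σ : ℝ => (2*(m:ℝ)+3)*c * (legP (m+1)).eval (c + (1-c)*σ^2)) MeasureTheory.volume 0 1)
        ((continuous_const.mul (cont_eval2 c _)).intervalIntegrable 0 1 : IntervalIntegrable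
          (fun σ : ℝ => (2*(m:ℝ)+3)/2 * (2*(1-c)*σ^2 * (legP (m+1)).eval (c + (1-c)*σ^2))) MeasureTheory.volume 0 1),
      ← intervalIntegral.integral_sub (f := (fun σ : ℝ => (2*(m:ℝ)+3)*c * (legP (m+1)).eval (c + (1-c)*σ^2)
            + (2*(m:ℝ)+3)/2 * (2*(1-c)*σ^2 * (legP (m+1)).eval (c + (1-c)*σ^2))))
        (g := (fun σ : ℝ => ((m:ℝ)+1) * (legP m).eval (c + (1-c)*σ^2)))
        (((continuous_const.mul (cont_eval c _)).add (continuous_const.mul (cont_eval2 c _))).intervalIntegrable 0 1 : IntervalIntegrable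
          (fun σ : ℝ => (2*(m:ℝ)+3)*c * (legP (m+1)).eval (c + (1-c)*σ^2)
            + (2*(m:ℝ)+3)/2 * (2*(1-c)*σ^2 * (legP (m+1)).eval (c + (1-c)*σ^2))) MeasureTheory.volume 0 1)
        ((continuous_const.mul (cont_eval c _)).intervalIntegrable 0 1 : IntervalIntegrable
          (fun σ : ℝ => ((m:ℝ)+1) * (legP m).eval (c + (1-c)*σ^2)) MeasureTheory.volume 0 1)]
    apply intervalIntegral.integral_congr
    intro σ _
    have := congrArg (eval (c + (1-c)*σ^2)) (bonnet m)
    simp only [eval_sub, eval_mul, eval_C, eval_X] at this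
    dsimp only
    linear_combination this
  linarith


lemma legI_base0 (c : ℝ) : legI (legP 0) c = 1 := by
  simp [legI, legP]

lemma legI_base1 (c : ℝ) : legI (legP 1) c = c + (1-c)/3 := by
  simp only [legI, legP, eval_X]
  rw [intervalIntegral.integral_add (continuous_const.intervalIntegrable 0 1)
    ((by continuity : Continuous fun σ:ℝ => (1-c)*σ^2).intervalIntegrable 0 1)]
  simp only [intervalIntegral.integral_const, intervalIntegral.integral_const_mul,
    integral_pow]
  norm_num
  ring

lemma legI_key (u : ℝ) : ∀ m : ℕ,
    (2*(m:ℝ)+1) * Real.sin (u/2) * legI (legP m) (Real.cos u) = Real.sin (((m:ℝ) + 1/2) * u) := by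
  have base1 : (2*(1:ℝ)+1) * Real.sin (u/2) * legI (legP 1) (Real.cos u)
      = Real.sin (((1:ℝ) + 1/2) * u) := by
    rw [legI_base1, show ((1:ℝ)+1/2)*u = u/2 + u by ring, Real.sin_add]
    have hsu : Real.sin u = 2 * Real.sin (u/2) * Real.cos (u/2) := by
      have := Real.sin_two_mul (u/2)
      rw [show 2*(u/2) = u by ring] at this
      linarith
    have h4 : Real.cos (u/2)^2 = 1/2 + Real.cos u / 2 := by
      have := Real.cos_sq (u/2)
      rwa [show 2*(u/2) = u by ring] at this
    linear_combination (-(Real.cos (u/2))) * hsu - (2*Real.sin (u/2)) * h4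
  have key : ∀ m : ℕ,
      ((2*(m:ℝ)+1) * Real.sin (u/2) * legI (legP m) (Real.cos u) = Real.sin (((m:ℝ) + 1/2) * u)) ∧
      ((2*(((m+1:ℕ)):ℝ)+1) * Real.sin (u/2) * legI (legP (m+1)) (Real.cos u)
        = Real.sin ((((m+1:ℕ):ℝ) + 1/2) * u)) := by
    intro m
    induction m with
    | zero =>
      constructor
      · push_cast
        rw [legI_base0, show ((0:ℝ)+1/2)*u = u/2 by ring]
        ring
      · have := base1
        push_cast at this ⊢
        linarith
    | succ n ih =>
      obtain ⟨h0, h1⟩ := ih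
      refine ⟨h1, ?_⟩
      have hrec := legI_rec (Real.cos u) n
      have hs1 := Real.sin_add (((n:ℝ) + 3/2) * u) u
      have hs2 := Real.sin_sub (((n:ℝ) + 3/2) * u) u
      push_cast
      push_cast at h0 h1
      rw [show ((n:ℝ)+1+1+1/2) * u = ((n:ℝ) + 3/2) * u + u by ring, hs1]
      rw [show ((n:ℝ)+1+1/2) * u = ((n:ℝ) + 3/2) * u by ring] at h1
      rw [show ((n:ℝ)+1/2) * u = ((n:ℝ) + 3/2) * u - u by ring, hs2] at h0
      linear_combination Real.sin (u/2) * hrec + (2*Real.cos u) * h1 - h0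
  exact fun m => (key m).1

end

theorem stmt_4 (m : ℕ) (u : ℝ) (hu0 : 0 < u) (huπ : u < π) :
    ∫ θ in (0 : ℝ)..u, legendreP m (Real.cos θ) * Real.sin θ / Real.sqrt (Real.cos θ - Real.cos u)
      = (2 * Real.sqrt 2 / (2 * (m : ℝ) + 1)) * Real.sin (((m : ℝ) + 1 / 2) * u) := by
  have hcu1 : Real.cos u < 1 := by
    have := Real.cos_lt_cos_of_nonneg_of_le_pi (le_refl 0) huπ.le hu0
    rwa [Real.cos_zero] at this
  set c := Real.cos u with hc
  have hcontp : Continuous fun s : ℝ => (legP m).eval (c + s^2) :=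
    (legP m).continuous.comp (by continuity)
  set Q : ℝ → ℝ := fun t => ∫ s in (0:ℝ)..t, (legP m).eval (c + s^2) with hQ
  have hQd : ∀ t : ℝ, HasDerivAt Q ((legP m).eval (c + t^2)) t := by
    intro t
    exact intervalIntegral.integral_hasDerivAt_right (hcontp.intervalIntegrable 0 t)
      (hcontp.stronglyMeasurableAtFilter _ _) hcontp.continuousAt
  have hQdiff : Differentiable ℝ Q := fun t => (hQd t).differentiableAt
  have hQcont : Continuous Q := hQdiff.continuous
  have hsqc : Continuous fun θ : ℝ => Real.sqrt (Real.cos θ - c) :=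
    Real.continuous_sqrt.comp (Real.continuous_cos.sub continuous_const)
  set H : ℝ → ℝ := fun θ => -2 * Q (Real.sqrt (Real.cos θ - c)) with hH
  have hHcont : Continuous H := continuous_const.mul (hQcont.comp hsqc)
  have hvpos : ∀ θ ∈ Set.Ioo (0:ℝ) u, 0 < Real.cos θ - c := by
    intro θ hθ
    have := Real.cos_lt_cos_of_nonneg_of_le_pi hθ.1.le huπ.le hθ.2
    linarith
  have hchain : ∀ θ ∈ Set.Ioo (0:ℝ) u,
      HasDerivAt (fun θ : ℝ => Real.sqrt (Real.cos θ - c))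
        (-Real.sin θ / (2 * Real.sqrt (Real.cos θ - c))) θ := by
    intro θ hθ
    have h1 : HasDerivAt (fun θ : ℝ => Real.cos θ - c) (-Real.sin θ) θ :=
      (Real.hasDerivAt_cos θ).sub_const c
    have h2 := (Real.hasDerivAt_sqrt (hvpos θ hθ).ne').comp θ h1
    refine h2.congr_deriv (Eq.symm ?_)
    ring
  have hHd : ∀ θ ∈ Set.Ioo (0:ℝ) u,
      HasDerivAt H ((legP m).eval (Real.cos θ) * Real.sin θ / Real.sqrt (Real.cos θ - c)) θ := by
    intro θ hθ
    have hv := hvpos θ hθ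
    have hs : Real.sqrt (Real.cos θ - c) ≠ 0 := (Real.sqrt_pos.mpr hv).ne'
    have h4 := ((hQd _).comp θ (hchain θ hθ)).const_mul (-2)
    refine h4.congr_deriv (Eq.symm ?_)
    rw [Real.sq_sqrt hv.le, show c + (Real.cos θ - c) = Real.cos θ by ring]
    field_simp
  -- integrability
  have hf0int : IntervalIntegrable (fun θ => Real.sin θ / Real.sqrt (Real.cos θ - c))
      MeasureTheory.volume 0 u := by
    apply intervalIntegral.intervalIntegrable_deriv_of_nonneg
      (g := fun θ => -2 * Real.sqrt (Real.cos θ - c))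
    · exact (continuous_const.mul hsqc).continuousOn
    · rw [min_eq_left hu0.le, max_eq_right hu0.le]
      intro θ hθ
      have h5 := (hchain θ hθ).const_mul (-2)
      refine h5.congr_deriv (Eq.symm ?_)
      rw [show (-2:ℝ) * (-Real.sin θ / (2 * Real.sqrt (Real.cos θ - c)))
        = (2 * Real.sin θ) / (2 * Real.sqrt (Real.cos θ - c)) by ring,
        mul_div_mul_left _ _ (by norm_num : (2:ℝ) ≠ 0)]
    · rw [min_eq_left hu0.le, max_eq_right hu0.le]
      intro θ hθ
      have hsin : 0 ≤ Real.sin θ := Real.sin_nonneg_of_nonneg_of_le_pi hθ.1.le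
        (by linarith [hθ.2])
      exact div_nonneg hsin (Real.sqrt_nonneg _)
  obtain ⟨Cb, hCb⟩ : ∃ Cb : ℝ, ∀ x ∈ Set.Icc (-1:ℝ) 1, ‖(legP m).eval x‖ ≤ Cb :=
    IsCompact.exists_bound_of_continuousOn isCompact_Icc (legP m).continuous.continuousOn
  have hCb0 : 0 ≤ Cb := le_trans (norm_nonneg _) (hCb 1 ⟨by norm_num, le_refl 1⟩)
  have hgint : IntervalIntegrable
      (fun θ => (legP m).eval (Real.cos θ) * Real.sin θ / Real.sqrt (Real.cos θ - c))
      MeasureTheory.volume 0 u := by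
    refine IntervalIntegrable.mono_fun (hf0int.const_mul Cb) ?_ ?_
    · exact ((((legP m).continuous.comp Real.continuous_cos).mul Real.continuous_sin).measurable.div
        (Real.continuous_sqrt.comp (Real.continuous_cos.sub continuous_const)).measurable).aestronglyMeasurable.restrict
    · rw [Set.uIoc_of_le hu0.le]
      refine Filter.eventually_of_mem (MeasureTheory.ae_restrict_mem measurableSet_Ioc) ?_
      intro θ hθ
      have hsin : 0 ≤ Real.sin θ := Real.sin_nonneg_of_nonneg_of_le_pi hθ.1.le
        (by linarith [hθ.2])
      have hsq : 0 ≤ Real.sqrt (Real.cos θ - c) := Real.sqrt_nonneg _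
      have hbd : |(legP m).eval (Real.cos θ)| ≤ Cb := by
        have := hCb (Real.cos θ) ⟨Real.neg_one_le_cos θ, Real.cos_le_one θ⟩
        rwa [Real.norm_eq_abs] at this
      simp only [Real.norm_eq_abs]
      rw [abs_div, abs_mul, abs_of_nonneg hsin, abs_of_nonneg hsq,
        abs_of_nonneg (mul_nonneg hCb0 (div_nonneg hsin hsq)), mul_div_assoc]
      exact mul_le_mul_of_nonneg_right hbd (div_nonneg hsin hsq)
  -- FTC
  simp only [← legP_eval]
  have hFTC := intervalIntegral.integral_eq_sub_of_hasDeriv_right_of_le hu0.le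
    hHcont.continuousOn (fun x hx => (hHd x hx).hasDerivWithinAt) hgint
  rw [hFTC]
  have hHu : H u = 0 := by
    show -2 * Q (Real.sqrt (Real.cos u - c)) = 0
    rw [hc, sub_self, Real.sqrt_zero]
    show -2 * (∫ s in (0:ℝ)..(0:ℝ), (legP m).eval (Real.cos u + s^2)) = 0
    rw [intervalIntegral.integral_same]
    ring
  have hH0 : H 0 = -2 * Q (Real.sqrt (1 - c)) := by
    show -2 * Q (Real.sqrt (Real.cos 0 - c)) = _
    rw [Real.cos_zero]
  set T := Real.sqrt (1 - c) with hT
  have h1c : (0:ℝ) ≤ 1 - c := by linarith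
  have hT2 : T^2 = 1 - c := Real.sq_sqrt h1c
  have hQT : Q T = T * legI (legP m) c := by
    show (∫ s in (0:ℝ)..T, (legP m).eval (c + s^2)) = T * legI (legP m) c
    have hcongr : (∫ σ in (0:ℝ)..1, (legP m).eval (c + (1-c)*σ^2))
        = ∫ σ in (0:ℝ)..1, (legP m).eval (c + (T*σ)^2) := by
      apply intervalIntegral.integral_congr
      intro σ _
      dsimp only
      rw [mul_pow, hT2]
    rw [legI, hcongr]
    have hs := intervalIntegral.smul_integral_comp_mul_left (a := 0) (b := 1)
      (fun s => (legP m).eval (c + s^2)) T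
    simp only [mul_zero, mul_one, smul_eq_mul] at hs
    exact hs.symm
  have hsin2 : 0 ≤ Real.sin (u/2) :=
    Real.sin_nonneg_of_nonneg_of_le_pi (by linarith) (by linarith [Real.pi_pos])
  have hTval : T = Real.sqrt 2 * Real.sin (u/2) := by
    have hcos2 : Real.cos (u/2)^2 = 1/2 + Real.cos u/2 := by
      have := Real.cos_sq (u/2); rwa [show 2*(u/2) = u by ring] at this
    have hsc := Real.sin_sq_add_cos_sq (u/2)
    have h1 : 1 - c = 2 * Real.sin (u/2)^2 := by rw [hc]; linarith
    rw [hT, h1, Real.sqrt_mul (by norm_num : (0:ℝ) ≤ 2), Real.sqrt_sq hsin2]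
  have key := legI_key u m
  rw [← hc] at key
  rw [hHu, hH0, hQT, hTval]
  have h2m : (2*(m:ℝ)+1) ≠ 0 := by positivity
  rw [div_mul_eq_mul_div, eq_div_iff h2m]
  linear_combination (2*Real.sqrt 2) * key
end

section
/- Under the regularity condition sup_l Σ_m |M_{lm}| ≤ q < 1 with bounded (B_l), the solutions X^{(n)} of the truncated n×n systems X_l^{(n)} − Σ_{m≤n} M_{lm} X_m^{(n)} = B_l (l ≤ n) exist, are uniformly bounded by ‖B‖∞/(1−q), and converge componentwise as n → ∞ to the unique ℓ∞-solution of the infinite system. -/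
open Real Set Filter

/-- Tail of the `l`-th row sum after index `n`. -/
noncomputable def tailS (M : ℕ → ℕ → ℝ) (n l : ℕ) : ℝ :=
  (∑' m, |M l m|) - ∑ m ∈ Finset.range (n + 1), |M l m|

/-- Iterated application of the abs-matrix to the tails. -/
noncomputable def gIt (M : ℕ → ℕ → ℝ) : ℕ → ℕ → ℕ → ℝ
  | 0 => tailS M
  | j + 1 => fun n l => ∑' m, |M l m| * gIt M j n m

lemma trunc_exists_unique (M : ℕ → ℕ → ℝ) (B : ℕ → ℝ) (q : ℝ) (hq : q < 1) (hq0 : 0 ≤ q)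
    (hrow : ∀ (n l : ℕ), ∑ m : Fin (n + 1), |M l m| ≤ q) (n : ℕ) :
    ∃ Z : Fin (n + 1) → ℝ, (∀ l, Z l = B l + ∑ m : Fin (n + 1), M (l : ℕ) m * Z m) ∧
      ∀ Y : Fin (n + 1) → ℝ, (∀ l, Y l = B l + ∑ m : Fin (n + 1), M (l : ℕ) m * Y m) → Y = Z := by
  set T : (Fin (n + 1) → ℝ) → (Fin (n + 1) → ℝ) :=
    fun Y l => B l + ∑ m : Fin (n + 1), M (l : ℕ) m * Y m with hT
  have hco : ((⟨q, hq0⟩ : NNReal) : ℝ) = q := rfl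
  have hcon : ContractingWith ⟨q, hq0⟩ T := by
    constructor
    · exact_mod_cast hq
    · apply LipschitzWith.of_dist_le_mul
      intro Y Z
      show dist (T Y) (T Z) ≤ q * dist Y Z
      refine (dist_pi_le_iff (mul_nonneg hq0 dist_nonneg)).2 fun l => ?_
      rw [Real.dist_eq]
      have : T Y l - T Z l = ∑ m : Fin (n + 1), M (l : ℕ) m * (Y m - Z m) := by
        simp only [hT]; rw [add_sub_add_left_eq_sub, ← Finset.sum_sub_distrib]; exact Finset.sum_congr rfl fun m _ => (mul_sub _ _ _).symm
      rw [this]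
      calc |∑ m : Fin (n + 1), M (l : ℕ) m * (Y m - Z m)|
          ≤ ∑ m : Fin (n + 1), |M (l : ℕ) m * (Y m - Z m)| := Finset.abs_sum_le_sum_abs _ _
        _ ≤ ∑ m : Fin (n + 1), |M (l : ℕ) m| * dist Y Z := by
            refine Finset.sum_le_sum fun m _ => ?_
            rw [abs_mul]
            refine mul_le_mul_of_nonneg_left ?_ (abs_nonneg _)
            rw [← Real.dist_eq]
            exact dist_le_pi_dist Y Z m
        _ = (∑ m : Fin (n + 1), |M (l : ℕ) m|) * dist Y Z := by rw [Finset.sum_mul]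
        _ ≤ q * dist Y Z := mul_le_mul_of_nonneg_right (hrow n l) dist_nonneg
  refine ⟨hcon.fixedPoint T, ?_, ?_⟩
  · intro l
    have := hcon.fixedPoint_isFixedPt
    unfold Function.IsFixedPt at this
    conv_lhs => rw [← this]
  · intro Y hY
    refine hcon.fixedPoint_unique ?_
    funext l
    exact (hY l).symm

set_option maxHeartbeats 2000000 in
theorem stmt_13 (M : ℕ → ℕ → ℝ) (B : ℕ → ℝ) (q : ℝ) (hq : q < 1)
    (hreg : ∀ l : ℕ, Summable (fun m => |M l m|) ∧ (∑' m : ℕ, |M l m|) ≤ q)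
    (hB : BddAbove (Set.range fun l : ℕ => |B l|))
    (X : ℕ → ℝ)
    (hXbdd : BddAbove (Set.range fun l : ℕ => |X l|))
    (hXsol : ∀ l : ℕ, X l - ∑' m : ℕ, M l m * X m = B l)
    (hXuniq : ∀ Y : ℕ → ℝ, BddAbove (Set.range fun l : ℕ => |Y l|) →
      (∀ l : ℕ, Y l - ∑' m : ℕ, M l m * Y m = B l) → Y = X) :
    ∃ Xn : (n : ℕ) → Fin (n + 1) → ℝ,
      (∀ n : ℕ, ∀ l : Fin (n + 1),
        Xn n l - ∑ m : Fin (n + 1), M l m * Xn n m = B l) ∧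
      (∀ n : ℕ, ∀ Y : Fin (n + 1) → ℝ,
        (∀ l : Fin (n + 1), Y l - ∑ m : Fin (n + 1), M l m * Y m = B l) → Y = Xn n) ∧
      (∀ n : ℕ, ∀ l : Fin (n + 1), |Xn n l| ≤ (⨆ l : ℕ, |B l|) / (1 - q)) ∧
      (∀ l : ℕ, Tendsto (fun n : ℕ =>
        if h : l < n + 1 then Xn n ⟨l, h⟩ else 0) atTop (nhds (X l))) := by
  have habs : ∀ l, Summable fun m => |M l m| := fun l => (hreg l).1
  have hq0 : 0 ≤ q := le_trans (tsum_nonneg fun m => abs_nonneg _) (hreg 0).2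
  have h1q : 0 < 1 - q := by linarith
  have hrow : ∀ (n l : ℕ), ∑ m : Fin (n + 1), |M l m| ≤ q := by
    intro n l
    rw [Fin.sum_univ_eq_sum_range (fun m => |M l m|)]
    exact le_trans (Summable.sum_le_tsum _ (fun i _ => abs_nonneg _) (habs l)) (hreg l).2
  choose Xn hXe hXu using trunc_exists_unique M B q hq hq0 hrow
  set S := ⨆ l : ℕ, |B l| with hS
  have hBl : ∀ l, |B l| ≤ S := fun l => le_ciSup hB l
  have hS0 : 0 ≤ S := le_trans (abs_nonneg _) (hBl 0)
  -- uniform bound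
  have hbd : ∀ n (l : Fin (n + 1)), |Xn n l| ≤ S / (1 - q) := by
    intro n l
    have hnn : (0 : ℝ) ≤ S + q * ‖Xn n‖ := by positivity
    have hN : ‖Xn n‖ ≤ S + q * ‖Xn n‖ := by
      refine (pi_norm_le_iff_of_nonneg hnn).2 fun i => ?_
      rw [Real.norm_eq_abs, hXe n i]
      calc |B (i : ℕ) + ∑ m : Fin (n + 1), M (i : ℕ) m * Xn n m|
          ≤ |B (i : ℕ)| + |∑ m : Fin (n + 1), M (i : ℕ) m * Xn n m| := abs_add_le _ _
        _ ≤ S + ∑ m : Fin (n + 1), |M (i : ℕ) m| * ‖Xn n‖ := by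
            refine add_le_add (hBl _) (le_trans (Finset.abs_sum_le_sum_abs _ _)
              (Finset.sum_le_sum fun m _ => ?_))
            rw [abs_mul]
            exact mul_le_mul_of_nonneg_left
              (by rw [← Real.norm_eq_abs]; exact norm_le_pi_norm _ m) (abs_nonneg _)
        _ = S + (∑ m : Fin (n + 1), |M (i : ℕ) m|) * ‖Xn n‖ := by rw [Finset.sum_mul]
        _ ≤ S + q * ‖Xn n‖ := by
            exact add_le_add_right (mul_le_mul_of_nonneg_right (hrow n i) (norm_nonneg _)) S
    have hNb : ‖Xn n‖ ≤ S / (1 - q) := by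
      rw [le_div_iff₀ h1q]; nlinarith [norm_nonneg (Xn n)]
    exact le_trans (by rw [← Real.norm_eq_abs]; exact norm_le_pi_norm _ l) hNb
  -- constants for convergence
  set C := max (⨆ l : ℕ, |X l|) (S / (1 - q)) with hCdef
  have hC0 : 0 ≤ C := le_trans (div_nonneg hS0 h1q.le) (le_max_right _ _)
  have hXC : ∀ m, |X m| ≤ C := fun m => le_trans (le_ciSup hXbdd m) (le_max_left _ _)
  have hXnC : ∀ n (l : Fin (n + 1)), |Xn n l| ≤ C := fun n l =>
    le_trans (hbd n l) (le_max_right _ _)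
  set D : ℕ → ℕ → ℝ := fun n m => if h : m < n + 1 then |Xn n ⟨m, h⟩ - X m| else 0 with hDdef
  have hD0 : ∀ n m, 0 ≤ D n m := by
    intro n m; simp only [hDdef]; split
    · exact abs_nonneg _
    · exact le_refl 0
  have hD2C : ∀ n m, D n m ≤ 2 * C := by
    intro n m; simp only [hDdef]; split
    · next h => calc |Xn n ⟨m, h⟩ - X m| ≤ |Xn n ⟨m, h⟩| + |X m| := abs_sub _ _
        _ ≤ C + C := add_le_add (hXnC n _) (hXC m)
        _ = 2 * C := by ring
    · linarith
  have hMsum : ∀ (l : ℕ) (a : ℝ) (f : ℕ → ℝ), (∀ m, 0 ≤ f m) → (∀ m, f m ≤ a) →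
      Summable (fun m => |M l m| * f m) := by
    intro l a f h0 ha
    exact Summable.of_nonneg_of_le (fun m => mul_nonneg (abs_nonneg _) (h0 m))
      (fun m => mul_le_mul_of_nonneg_left (ha m) (abs_nonneg _)) ((habs l).mul_right a)
  have hτ0 : ∀ n l, 0 ≤ tailS M n l := by
    intro n l
    exact sub_nonneg.2 (Summable.sum_le_tsum _ (fun i _ => abs_nonneg _) (habs l))
  have hτq : ∀ n l, tailS M n l ≤ q := by
    intro n l
    have h1 : (0 : ℝ) ≤ ∑ m ∈ Finset.range (n + 1), |M l m| :=
      Finset.sum_nonneg fun i _ => abs_nonneg _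
    have := (hreg l).2
    unfold tailS; linarith
  have hτtend : ∀ l, Tendsto (fun n => tailS M n l) atTop (nhds 0) := by
    intro l
    have h1 := (habs l).hasSum.tendsto_sum_nat
    have h2 : Tendsto (fun n => ∑ m ∈ Finset.range (n + 1), |M l m|) atTop
        (nhds (∑' m, |M l m|)) := h1.comp (tendsto_add_atTop_nat 1)
    have h3 := (tendsto_const_nhds (x := ∑' m, |M l m|) (f := atTop)).sub h2
    simpa [tailS] using h3
  -- tail estimate
  have habsMX : ∀ l, Summable fun m => |M l m * X m| := by
    intro l
    have := hMsum l C (fun m => |X m|) (fun m => abs_nonneg _) hXC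
    simpa [abs_mul] using this
  have htail : ∀ n l, |(∑' m, M l m * X m) - ∑ m ∈ Finset.range (n + 1), M l m * X m|
      ≤ C * tailS M n l := by
    intro n l
    have hFs : Summable (fun m => M l m * X m) := (habsMX l).of_abs
    have h1 := Summable.sum_add_tsum_compl (s := Finset.range (n + 1)) hFs
    have h2 := Summable.sum_add_tsum_compl (s := Finset.range (n + 1)) (habs l)
    have e1 : (∑' m, M l m * X m) - ∑ m ∈ Finset.range (n + 1), M l m * X m
        = ∑' (m : ↑((Finset.range (n + 1) : Finset ℕ) : Set ℕ)ᶜ), M l (m : ℕ) * X (m : ℕ) := by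
      rw [← h1]; ring
    have e2 : tailS M n l
        = ∑' (m : ↑((Finset.range (n + 1) : Finset ℕ) : Set ℕ)ᶜ), |M l (m : ℕ)| := by
      unfold tailS; rw [← h2]; ring
    rw [e1, e2]
    have hs1 : Summable fun m : ↑((Finset.range (n + 1) : Finset ℕ) : Set ℕ)ᶜ =>
        |M l (m : ℕ) * X (m : ℕ)| := (habsMX l).subtype _
    calc |∑' (m : ↑((Finset.range (n + 1) : Finset ℕ) : Set ℕ)ᶜ), M l (m : ℕ) * X (m : ℕ)|
        ≤ ∑' (m : ↑((Finset.range (n + 1) : Finset ℕ) : Set ℕ)ᶜ), |M l (m : ℕ) * X (m : ℕ)| := by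
          have h6 := norm_tsum_le_tsum_norm
            (f := fun m : ↑((Finset.range (n + 1) : Finset ℕ) : Set ℕ)ᶜ => M l (m : ℕ) * X (m : ℕ))
            (by simpa only [← Real.norm_eq_abs] using hs1)
          simpa only [Real.norm_eq_abs] using h6
      _ ≤ ∑' (m : ↑((Finset.range (n + 1) : Finset ℕ) : Set ℕ)ᶜ), |M l (m : ℕ)| * C := by
          refine Summable.tsum_le_tsum (fun m => ?_) hs1 (((habs l).mul_right C).subtype _)
          rw [abs_mul]
          exact mul_le_mul_of_nonneg_left (hXC _) (abs_nonneg _)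
      _ = (∑' (m : ↑((Finset.range (n + 1) : Finset ℕ) : Set ℕ)ᶜ), |M l (m : ℕ)|) * C :=
          tsum_mul_right
      _ = C * _ := mul_comm _ _
  -- master inequality
  have hmaster : ∀ n l, D n l ≤ (∑' m, |M l m| * D n m) + C * tailS M n l := by
    intro n l
    by_cases hl : l < n + 1
    · have efin : (∑ m : Fin (n + 1), M l (m : ℕ) * Xn n m)
          = ∑ m ∈ Finset.range (n + 1), M l m * (if h : m < n + 1 then Xn n ⟨m, h⟩ else 0) := by
        rw [← Fin.sum_univ_eq_sum_range
          (fun m => M l m * (if h : m < n + 1 then Xn n ⟨m, h⟩ else 0)) (n + 1)]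
        refine Finset.sum_congr rfl fun m _ => ?_
        rw [dif_pos m.isLt]
      have e1 : Xn n ⟨l, hl⟩ = B l
          + ∑ m ∈ Finset.range (n + 1), M l m * (if h : m < n + 1 then Xn n ⟨m, h⟩ else 0) := by
        rw [hXe n ⟨l, hl⟩]
        exact congrArg (B l + ·) efin
      have e2 : X l = B l + ∑' m, M l m * X m := by have := hXsol l; linarith
      have key : Xn n ⟨l, hl⟩ - X l =
          (∑ m ∈ Finset.range (n + 1),
            M l m * ((if h : m < n + 1 then Xn n ⟨m, h⟩ else 0) - X m))
          - ((∑' m, M l m * X m) - ∑ m ∈ Finset.range (n + 1), M l m * X m) := by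
        have hsub : (∑ m ∈ Finset.range (n + 1),
            M l m * ((if h : m < n + 1 then Xn n ⟨m, h⟩ else 0) - X m))
            = (∑ m ∈ Finset.range (n + 1), M l m * (if h : m < n + 1 then Xn n ⟨m, h⟩ else 0))
              - ∑ m ∈ Finset.range (n + 1), M l m * X m := by
          rw [← Finset.sum_sub_distrib]
          exact Finset.sum_congr rfl fun m _ => by ring
        rw [e1, e2, hsub]
        ring
      have hDl : D n l = |Xn n ⟨l, hl⟩ - X l| := dif_pos hl
      rw [hDl, key]
      calc |_ - _| ≤ |∑ m ∈ Finset.range (n + 1),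
              M l m * ((if h : m < n + 1 then Xn n ⟨m, h⟩ else 0) - X m)|
            + |(∑' m, M l m * X m) - ∑ m ∈ Finset.range (n + 1), M l m * X m| := abs_sub _ _
        _ ≤ (∑' m, |M l m| * D n m) + C * tailS M n l := by
            refine add_le_add ?_ (htail n l)
            calc |∑ m ∈ Finset.range (n + 1),
                M l m * ((if h : m < n + 1 then Xn n ⟨m, h⟩ else 0) - X m)|
                ≤ ∑ m ∈ Finset.range (n + 1),
                  |M l m * ((if h : m < n + 1 then Xn n ⟨m, h⟩ else 0) - X m)| :=
                  Finset.abs_sum_le_sum_abs _ _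
              _ = ∑ m ∈ Finset.range (n + 1), |M l m| * D n m := by
                  refine Finset.sum_congr rfl fun m hm => ?_
                  have hmn : m < n + 1 := Finset.mem_range.1 hm
                  rw [abs_mul]
                  simp only [hDdef, dif_pos hmn]
              _ ≤ ∑' m, |M l m| * D n m := Summable.sum_le_tsum _
                  (fun i _ => mul_nonneg (abs_nonneg _) (hD0 n i))
                  (hMsum l (2 * C) (D n) (hD0 n) (hD2C n))
    · have hz : D n l = 0 := dif_neg hl
      rw [hz]
      exact add_nonneg (tsum_nonneg fun m => mul_nonneg (abs_nonneg _) (hD0 n m))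
        (mul_nonneg hC0 (hτ0 n l))
  -- properties of the iterates gIt
  have hgbd : ∀ j n l, 0 ≤ gIt M j n l ∧ gIt M j n l ≤ q := by
    intro j
    induction j with
    | zero => exact fun n l => ⟨hτ0 n l, hτq n l⟩
    | succ j ih =>
      intro n l
      constructor
      · exact tsum_nonneg fun m => mul_nonneg (abs_nonneg _) (ih n m).1
      · calc (∑' m, |M l m| * gIt M j n m) ≤ ∑' m, |M l m| * q :=
            Summable.tsum_le_tsum (fun m => mul_le_mul_of_nonneg_left (ih n m).2 (abs_nonneg _))
              (hMsum l q _ (fun m => (ih n m).1) (fun m => (ih n m).2)) ((habs l).mul_right q)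
          _ = (∑' m, |M l m|) * q := tsum_mul_right
          _ ≤ q * q := mul_le_mul_of_nonneg_right (hreg l).2 hq0
          _ ≤ 1 * q := mul_le_mul_of_nonneg_right hq.le hq0
          _ = q := one_mul q
  have hgtend : ∀ j l, Tendsto (fun n => gIt M j n l) atTop (nhds 0) := by
    intro j
    induction j with
    | zero => exact hτtend
    | succ j ih =>
      intro l
      have h := tendsto_tsum_of_dominated_convergence
        (f := fun n m => |M l m| * gIt M j n m) (g := fun _ => (0 : ℝ))
        (bound := fun m => |M l m| * q) ((habs l).mul_right q)
        (fun m => by simpa using (tendsto_const_nhds (x := |M l m|) (f := atTop)).mul (ih m))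
        (Filter.Eventually.of_forall fun n m => by
          rw [Real.norm_eq_abs, abs_of_nonneg (mul_nonneg (abs_nonneg _) (hgbd j n m).1)]
          exact mul_le_mul_of_nonneg_left (hgbd j n m).2 (abs_nonneg _))
      simpa [gIt] using h
  -- key iterated inequality
  have hkey : ∀ k n l, D n l ≤ q ^ k * (2 * C) + C * ∑ j ∈ Finset.range k, gIt M j n l := by
    intro k
    induction k with
    | zero => intro n l; simpa using hD2C n l
    | succ k ih =>
      intro n l
      have hsum_nonneg : ∀ (n m : ℕ),
          0 ≤ q ^ k * (2 * C) + C * ∑ j ∈ Finset.range k, gIt M j n m := by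
        intro n m
        exact add_nonneg (mul_nonneg (pow_nonneg hq0 k) (by linarith))
          (mul_nonneg hC0 (Finset.sum_nonneg fun j _ => (hgbd j n m).1))
      have hsum_le : ∀ (n m : ℕ),
          q ^ k * (2 * C) + C * ∑ j ∈ Finset.range k, gIt M j n m
            ≤ q ^ k * (2 * C) + C * (k * q) := by
        intro n m
        refine add_le_add_right (mul_le_mul_of_nonneg_left ?_ hC0) _
        calc (∑ j ∈ Finset.range k, gIt M j n m) ≤ ∑ _j ∈ Finset.range k, q :=
              Finset.sum_le_sum fun j _ => (hgbd j n m).2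
          _ = k * q := by simp [Finset.sum_const, nsmul_eq_mul]
      have step1 : (∑' m, |M l m| * D n m)
          ≤ ∑' m, |M l m| * (q ^ k * (2 * C) + C * ∑ j ∈ Finset.range k, gIt M j n m) :=
        Summable.tsum_le_tsum (fun m => mul_le_mul_of_nonneg_left (ih n m) (abs_nonneg _))
          (hMsum l (2 * C) (D n) (hD0 n) (hD2C n))
          (hMsum l (q ^ k * (2 * C) + C * (k * q)) _ (hsum_nonneg n) (hsum_le n))
      have hs1 : Summable fun m => |M l m| * (q ^ k * (2 * C)) := (habs l).mul_right _
      have hs2 : Summable fun m => |M l m| * (C * ∑ j ∈ Finset.range k, gIt M j n m) := by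
        refine hMsum l (C * (k * q)) _ ?_ ?_
        · intro m
          exact mul_nonneg hC0 (Finset.sum_nonneg fun j _ => (hgbd j n m).1)
        · intro m
          refine mul_le_mul_of_nonneg_left ?_ hC0
          calc (∑ j ∈ Finset.range k, gIt M j n m) ≤ ∑ _j ∈ Finset.range k, q :=
                Finset.sum_le_sum fun j _ => (hgbd j n m).2
            _ = k * q := by simp [Finset.sum_const, nsmul_eq_mul]
      have expand : (∑' m, |M l m| * (q ^ k * (2 * C) + C * ∑ j ∈ Finset.range k, gIt M j n m))
          = (∑' m, |M l m|) * (q ^ k * (2 * C))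
            + C * ∑ j ∈ Finset.range k, gIt M (j + 1) n l := by
        rw [show (fun m => |M l m| * (q ^ k * (2 * C) + C * ∑ j ∈ Finset.range k, gIt M j n m))
            = fun m => |M l m| * (q ^ k * (2 * C))
              + |M l m| * (C * ∑ j ∈ Finset.range k, gIt M j n m) from funext fun m => by ring]
        rw [Summable.tsum_add hs1 hs2, tsum_mul_right]
        congr 1
        calc (∑' m, |M l m| * (C * ∑ j ∈ Finset.range k, gIt M j n m))
            = ∑' m, C * ∑ j ∈ Finset.range k, |M l m| * gIt M j n m := by
              refine tsum_congr fun m => ?_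
              rw [Finset.mul_sum]
              ring_nf
              rw [Finset.mul_sum, Finset.mul_sum]
              refine Finset.sum_congr rfl fun j _ => by ring
          _ = C * ∑' m, ∑ j ∈ Finset.range k, |M l m| * gIt M j n m := tsum_mul_left
          _ = C * ∑ j ∈ Finset.range k, ∑' m, |M l m| * gIt M j n m := by
              rw [Summable.tsum_finsetSum fun j _ =>
                hMsum l q _ (fun m => (hgbd j n m).1) (fun m => (hgbd j n m).2)]
          _ = C * ∑ j ∈ Finset.range k, gIt M (j + 1) n l := rfl
      have hstep2 : (∑' m, |M l m|) * (q ^ k * (2 * C)) ≤ q * (q ^ k * (2 * C)) :=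
        mul_le_mul_of_nonneg_right (hreg l).2 (by positivity)
      calc D n l ≤ (∑' m, |M l m| * D n m) + C * tailS M n l := hmaster n l
        _ ≤ ((∑' m, |M l m|) * (q ^ k * (2 * C))
              + C * ∑ j ∈ Finset.range k, gIt M (j + 1) n l) + C * tailS M n l := by
            rw [← expand]; linarith
        _ ≤ (q * (q ^ k * (2 * C)) + C * ∑ j ∈ Finset.range k, gIt M (j + 1) n l)
              + C * tailS M n l := by linarith
        _ = q ^ (k + 1) * (2 * C) + C * ∑ j ∈ Finset.range (k + 1), gIt M j n l := by
            rw [Finset.sum_range_succ' (fun j => gIt M j n l) k]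
            show _ = q ^ (k + 1) * (2 * C)
              + C * (∑ j ∈ Finset.range k, gIt M (j + 1) n l + tailS M n l)
            rw [pow_succ]
            ring
  -- componentwise convergence of D to 0
  have hDtend : ∀ l, Tendsto (fun n => D n l) atTop (nhds 0) := by
    intro l
    rw [Metric.tendsto_atTop]
    intro ε hε
    obtain ⟨k, hk⟩ : ∃ k, q ^ k * (2 * C) < ε / 2 := by
      have h := (tendsto_pow_atTop_nhds_zero_of_lt_one hq0 hq).mul_const (2 * C)
      rw [zero_mul] at h
      exact (h.eventually_lt_const (by positivity)).exists
    have h2 : Tendsto (fun n => C * ∑ j ∈ Finset.range k, gIt M j n l) atTop (nhds 0) := by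
      have h3 : Tendsto (fun n => ∑ j ∈ Finset.range k, gIt M j n l) atTop (nhds 0) := by
        have := tendsto_finset_sum (Finset.range k) (fun j _ => hgtend j l)
        simpa using this
      simpa using h3.const_mul C
    obtain ⟨N, hN⟩ := (Metric.tendsto_atTop.1 h2) (ε / 2) (by positivity)
    refine ⟨N, fun n hn => ?_⟩
    have h3 := hN n hn
    rw [Real.dist_eq, sub_zero] at h3
    rw [Real.dist_eq, sub_zero, abs_of_nonneg (hD0 n l)]
    have h4 : |C * ∑ j ∈ Finset.range k, gIt M j n l|
        = C * ∑ j ∈ Finset.range k, gIt M j n l :=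
      abs_of_nonneg (mul_nonneg hC0 (Finset.sum_nonneg fun j _ => (hgbd j n l).1))
    rw [h4] at h3
    calc D n l ≤ q ^ k * (2 * C) + C * ∑ j ∈ Finset.range k, gIt M j n l := hkey k n l
      _ < ε / 2 + ε / 2 := by linarith
      _ = ε := by ring
  refine ⟨Xn, fun n l => sub_eq_iff_eq_add.2 (hXe n l),
    fun n Y hY => hXu n Y (fun l => eq_add_of_sub_eq (hY l)), hbd, ?_⟩
  intro l
  rw [Metric.tendsto_atTop]
  intro ε hε
  obtain ⟨N, hN⟩ := Metric.tendsto_atTop.1 (hDtend l) ε hε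
  refine ⟨max N l, fun n hn => ?_⟩
  have hln : l < n + 1 :=
    lt_of_le_of_lt (le_trans (le_max_right N l) hn) (Nat.lt_succ_self n)
  have h5 := hN n (le_trans (le_max_left N l) hn)
  rw [Real.dist_eq, sub_zero, abs_of_nonneg (hD0 n l)] at h5
  have hDeq : D n l = |Xn n ⟨l, hln⟩ - X l| := dif_pos hln
  simp only [dif_pos hln, Real.dist_eq]
  rw [← hDeq]
  exact h5
end
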